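/- arXiv:1302.1340 — 2 statements merged into one kernel-verified Lean document; each statement's English description precedes it below -/
import Mathlib

section
/- If φ and ψ are F-filters on X, then: (i) φ̂ = ⋂_{A ∈ φ} Â; (ii) φ = ⋂_{p ∈ φ̂} p; (iii) φ ⊆ ψ if and only if ψ̂ ⊆ φ̂; (iv) φ = ψ if and only if φ̂ = ψ̂. -/
open Set

variable {X : Type*} [Nonempty X] [TopologicalSpace X] [DiscreteTopology X]

/-- The set `X(f,r) = {x ∈ X : |f(x)| ≤ r}`. -/
def XSet (f : BoundedContinuousFunction X ℂ) (r : ℝ) : Set X := {x | ‖f x‖ ≤ r}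

/-- An `F`-family on `X`: a nonempty collection of nonempty subsets of `X` such that for every
member `A ≠ X` there are `B` in the collection and `f ∈ F` with `f(B) = {0}`,
`f(X \ A) = {1}`. -/
def FFamily (F : StarSubalgebra ℂ (BoundedContinuousFunction X ℂ)) (𝒜 : Set (Set X)) : Prop :=
  𝒜.Nonempty ∧ (∀ A ∈ 𝒜, A.Nonempty) ∧
    ∀ A ∈ 𝒜, A ≠ Set.univ →
      ∃ B ∈ 𝒜, ∃ f ∈ F, (∀ x ∈ B, f x = 0) ∧ ∀ x ∉ A, f x = 1

/-- A filter on the set `X`, viewed as a collection of subsets. -/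
def IsSetFilter (φ : Set (Set X)) : Prop :=
  φ.Nonempty ∧ (∀ A ∈ φ, ∀ B ∈ φ, A ∩ B ∈ φ) ∧
    (∀ A ∈ φ, ∀ B : Set X, A ⊆ B → B ∈ φ) ∧ ∅ ∉ φ

/-- An `F`-filter on `X` is a filter which is also an `F`-family. -/
def FFilter (F : StarSubalgebra ℂ (BoundedContinuousFunction X ℂ)) (φ : Set (Set X)) : Prop :=
  IsSetFilter φ ∧ FFamily F φ

/-- An `F`-ultrafilter on `X` is an `F`-filter maximal with respect to inclusion. -/
def FUltrafilter (F : StarSubalgebra ℂ (BoundedContinuousFunction X ℂ)) (φ : Set (Set X)) : Prop :=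
  FFilter F φ ∧ ∀ ψ : Set (Set X), FFilter F ψ → φ ⊆ ψ → ψ = φ

/-- `F₀ = {f ∈ F : X(f,r) ≠ ∅ for all r > 0}`. -/
def FZero (F : StarSubalgebra ℂ (BoundedContinuousFunction X ℂ)) :
    Set (BoundedContinuousFunction X ℂ) :=
  {f | f ∈ F ∧ ∀ r : ℝ, 0 < r → (XSet f r).Nonempty}

/-- `Z(A) = {f ∈ F : f(x) = 0 for all x ∈ A}`. -/
def ZSet (F : StarSubalgebra ℂ (BoundedContinuousFunction X ℂ)) (A : Set X) :
    Set (BoundedContinuousFunction X ℂ) :=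
  {f | f ∈ F ∧ ∀ x ∈ A, f x = 0}

/-- The finite intersection property. -/
def FIP (𝒜 : Set (Set X)) : Prop :=
  ∀ s : Finset (Set X), ↑s ⊆ 𝒜 → s.Nonempty → (⋂₀ (s : Set (Set X))).Nonempty

/-- A filter base on `X`. -/
def IsFilterBase (ℬ : Set (Set X)) : Prop :=
  ℬ.Nonempty ∧ ∅ ∉ ℬ ∧ ∀ A ∈ ℬ, ∀ B ∈ ℬ, ∃ C ∈ ℬ, C ⊆ A ∩ B

/-- The filter generated by a filter base. -/
def genFilter (ℬ : Set (Set X)) : Set (Set X) :=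
  {A | ∃ B ∈ ℬ, B ⊆ A}

/-- `δX`, the space of all `F`-ultrafilters on `X`. -/
def Delta (F : StarSubalgebra ℂ (BoundedContinuousFunction X ℂ)) : Type _ :=
  {p : Set (Set X) // FUltrafilter F p}

/-- `Â = {p ∈ δX : A ∈ p}`. -/
def hatSet (F : StarSubalgebra ℂ (BoundedContinuousFunction X ℂ)) (A : Set X) :
    Set (Delta F) :=
  {p | A ∈ p.1}

/-- The topology on `δX` having `{Â : A ⊆ X}` as a base. -/
instance (F : StarSubalgebra ℂ (BoundedContinuousFunction X ℂ)) :
    TopologicalSpace (Delta F) :=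
  TopologicalSpace.generateFrom {S | ∃ A : Set X, S = hatSet F A}

/-- For an `F`-filter `φ`, `φ̂ = {p ∈ δX : φ ⊆ p}`. -/
def hatF (F : StarSubalgebra ℂ (BoundedContinuousFunction X ℂ)) (φ : Set (Set X)) :
    Set (Delta F) :=
  {p | φ ⊆ p.1}

/-- `τ(F)`, the weakest topology on `X` making every member of `F` continuous. -/
noncomputable def tauF (F : StarSubalgebra ℂ (BoundedContinuousFunction X ℂ)) : TopologicalSpace X :=
  ⨅ f ∈ (F : Set (BoundedContinuousFunction X ℂ)),
    TopologicalSpace.induced (fun x => f x) inferInstance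

/-- `B(I) = {X(f,r) : f ∈ I, r > 0}` for an ideal `I` of `F`. -/
def BIdeal (F : StarSubalgebra ℂ (BoundedContinuousFunction X ℂ)) (I : Ideal F) :
    Set (Set X) :=
  {S | ∃ f ∈ I, ∃ r : ℝ, 0 < r ∧ S = XSet (f : BoundedContinuousFunction X ℂ) r}

open Polynomial BoundedContinuousFunction

set_option linter.unusedSectionVars false

/-- Evaluation at a point as an algebra homomorphism. -/
noncomputable def evalAH (x : X) : BoundedContinuousFunction X ℂ →ₐ[ℂ] ℂ where
  toFun f := f x
  map_one' := rfl
  map_mul' _ _ := rfl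
  map_zero' := rfl
  map_add' _ _ := rfl
  commutes' c := by simp [BoundedContinuousFunction.algebraMap_apply]

lemma sep_lemma (F : StarSubalgebra ℂ (BoundedContinuousFunction X ℂ))
    (hF : IsClosed (F : Set (BoundedContinuousFunction X ℂ)))
    (k : BoundedContinuousFunction X ℂ) (hk : k ∈ F)
    (hker : ∀ x, ∃ t : ℝ, 0 ≤ t ∧ k x = t) :
    ∃ u ∈ F, (∀ x, (k x).re ≤ 1/4 → u x = 0) ∧ (∀ x, 1 ≤ (k x).re → u x = 1) := by
  set w : ℝ → ℝ := fun t => max 0 (min 1 ((4*t-1)/3)) with hw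
  have hw0 : ∀ t : ℝ, t ≤ 1/4 → w t = 0 := by
    intro t ht
    have : (4*t-1)/3 ≤ 0 := by linarith
    simp only [hw]
    rw [max_eq_left]
    exact le_trans (min_le_right _ _) this
  have hw1 : ∀ t : ℝ, 1 ≤ t → w t = 1 := by
    intro t ht
    have h1 : (1:ℝ) ≤ (4*t-1)/3 := by linarith
    simp only [hw]
    rw [min_eq_left h1, max_eq_right zero_le_one]
  have hwb : ∀ t : ℝ, ‖((w t : ℝ) : ℂ)‖ ≤ 1 := by
    intro t
    rw [Complex.norm_real]
    rw [Real.norm_eq_abs, abs_of_nonneg (le_max_left _ _)]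
    exact max_le zero_le_one (le_trans (min_le_left _ _) le_rfl)
  have hwc : Continuous w := by fun_prop
  set u : BoundedContinuousFunction X ℂ :=
    BoundedContinuousFunction.ofNormedAddCommGroupDiscrete
      (fun x => ((w ((k x).re) : ℝ) : ℂ)) 1 (fun x => hwb _) with hu
  have huapp : ∀ x, u x = ((w ((k x).re) : ℝ) : ℂ) := fun x => rfl
  refine ⟨u, ?_, fun x hx => by rw [huapp, hw0 _ hx]; simp, fun x hx => by rw [huapp, hw1 _ hx]; simp⟩
  -- show u ∈ F using Weierstrass approximation and closedness
  have : u ∈ closure (F : Set (BoundedContinuousFunction X ℂ)) := by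
    rw [Metric.mem_closure_iff]
    intro ε hε
    obtain ⟨p, hp⟩ := exists_polynomial_near_of_continuousOn 0 ‖k‖ w hwc.continuousOn (ε/2)
      (by linarith)
    set b : BoundedContinuousFunction X ℂ := aeval k (p.map (algebraMap ℝ ℂ)) with hb
    have hbF : b ∈ F := by
      have h1 : b ∈ Algebra.adjoin ℂ ({k} : Set (BoundedContinuousFunction X ℂ)) :=
        aeval_mem_adjoin_singleton ℂ k
    -- adjoin ℂ {k} ≤ F.toSubalgebra
      have h2 : Algebra.adjoin ℂ ({k} : Set (BoundedContinuousFunction X ℂ)) ≤ F.toSubalgebra :=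
        Algebra.adjoin_le (by simpa using hk)
      exact h2 h1
    refine ⟨b, hbF, ?_⟩
    have hdist : dist u b ≤ ε/2 := by
      rw [BoundedContinuousFunction.dist_le (by linarith)]
      intro x
      obtain ⟨t, ht0, htk⟩ := hker x
      have hre : (k x).re = t := by rw [htk, Complex.ofReal_re]
      have hbx : b x = ((p.eval t : ℝ) : ℂ) := by
        have e2 : b x = evalAH x (aeval k (p.map (algebraMap ℝ ℂ))) := rfl
        rw [e2, ← aeval_algHom_apply]
        show aeval (k x) (p.map (algebraMap ℝ ℂ)) = _
        rw [aeval_map_algebraMap, htk]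
        have := aeval_algebraMap_apply_eq_algebraMap_eval (A := ℂ) t p
        simpa using this
      have htI : t ∈ Set.Icc (0:ℝ) ‖k‖ := by
        refine ⟨ht0, ?_⟩
        have h3 : t ≤ ‖k x‖ := by
          rw [← hre]; exact Complex.re_le_norm _
        calc t ≤ ‖k x‖ := h3
          _ = ‖k x‖ := rfl
          _ ≤ ‖k‖ := k.norm_coe_le_norm x
      have := hp t htI
      rw [dist_eq_norm, huapp, hbx, hre]
      rw [← Complex.ofReal_sub, Complex.norm_real, Real.norm_eq_abs]
      rw [abs_sub_comm]
      linarith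
    linarith [hdist, hε]
  exact hF.closure_subset this

lemma univ_mem_of_filter {φ : Set (Set X)} (hφ : IsSetFilter φ) : Set.univ ∈ φ := by
  obtain ⟨C, hC⟩ := hφ.1
  exact hφ.2.2.1 C hC _ (Set.subset_univ C)

/-- The extension of a filter `φ` by the sets `X(g,r)`. -/
def extFilter (φ : Set (Set X)) (g : BoundedContinuousFunction X ℂ) : Set (Set X) :=
  {A | ∃ C ∈ φ, ∃ r : ℝ, 0 < r ∧ C ∩ XSet g r ⊆ A}

lemma extFilter_spec (F : StarSubalgebra ℂ (BoundedContinuousFunction X ℂ))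
    (hF : IsClosed (F : Set (BoundedContinuousFunction X ℂ)))
    {φ : Set (Set X)} (hφ : FFilter F φ) {g : BoundedContinuousFunction X ℂ} (hg : g ∈ F)
    (hne : ∀ C ∈ φ, ∀ r : ℝ, 0 < r → (C ∩ XSet g r).Nonempty) :
    FFilter F (extFilter φ g) ∧ φ ⊆ extFilter φ g ∧
      ∀ r : ℝ, 0 < r → XSet g r ∈ extFilter φ g := by
  have huniv : Set.univ ∈ φ := univ_mem_of_filter hφ.1
  have hsub : φ ⊆ extFilter φ g := by
    intro C hC
    exact ⟨C, hC, 1, one_pos, Set.inter_subset_left⟩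
  have hXmem : ∀ r : ℝ, 0 < r → XSet g r ∈ extFilter φ g := by
    intro r hr
    exact ⟨Set.univ, huniv, r, hr, Set.inter_subset_right⟩
  refine ⟨⟨?_, ?_⟩, hsub, hXmem⟩
  · -- IsSetFilter
    refine ⟨⟨Set.univ, hsub huniv⟩, ?_, ?_, ?_⟩
    · rintro A ⟨C, hC, r, hr, hCrA⟩ B ⟨D, hD, s, hs, hDsB⟩
      refine ⟨C ∩ D, hφ.1.2.1 C hC D hD, min r s, lt_min hr hs, ?_⟩
      rintro x ⟨⟨hxC, hxD⟩, hxg⟩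
      have hxg' : ‖g x‖ ≤ min r s := hxg
      exact ⟨hCrA ⟨hxC, le_trans hxg' (min_le_left _ _)⟩,
        hDsB ⟨hxD, le_trans hxg' (min_le_right _ _)⟩⟩
    · rintro A ⟨C, hC, r, hr, hCrA⟩ B hAB
      exact ⟨C, hC, r, hr, hCrA.trans hAB⟩
    · rintro ⟨C, hC, r, hr, hCr⟩
      exact (hne C hC r hr).ne_empty (Set.subset_empty_iff.mp hCr)
  · -- FFamily
    refine ⟨⟨Set.univ, hsub huniv⟩, ?_, ?_⟩
    · rintro A ⟨C, hC, r, hr, hCrA⟩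
      exact (hne C hC r hr).mono hCrA
    · rintro A ⟨C, hC, r, hr, hCrA⟩ hAuniv
      -- get h vanishing on some C' ∈ φ and equal to 1 outside C
      obtain ⟨C', hC', h, hhF, hh0, hh1⟩ :
          ∃ C' ∈ φ, ∃ h ∈ F, (∀ x ∈ C', h x = 0) ∧ ∀ x ∉ C, h x = 1 := by
        by_cases hCu : C = Set.univ
        · exact ⟨Set.univ, huniv, 0, zero_mem _, by simp, by simp [hCu]⟩
        · exact hφ.2.2.2 C hC hCu
      -- the auxiliary element k
      set c : ℂ := (((r^2)⁻¹ : ℝ) : ℂ) with hc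
      set k : BoundedContinuousFunction X ℂ :=
        h * star h + (algebraMap ℂ _ c) * (g * star g) with hkdef
      have hkF : k ∈ F := by
        exact add_mem (mul_mem hhF (star_mem hhF))
          (mul_mem (StarSubalgebra.algebraMap_mem F c) (mul_mem hg (star_mem hg)))
      have hkapp : ∀ x, k x = ((Complex.normSq (h x) + (r^2)⁻¹ * Complex.normSq (g x) : ℝ) : ℂ) := by
        intro x
        have : k x = h x * star (h x) + c * (g x * star (g x)) := by
          simp [hkdef, BoundedContinuousFunction.mul_apply,
            BoundedContinuousFunction.star_apply, BoundedContinuousFunction.algebraMap_apply,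
            smul_eq_mul]
        rw [this]
        simp only [RCLike.star_def, Complex.mul_conj, hc]
        push_cast
        ring
      have hker : ∀ x, ∃ t : ℝ, 0 ≤ t ∧ k x = t := by
        intro x
        refine ⟨_, ?_, hkapp x⟩
        have := Complex.normSq_nonneg (h x)
        have := Complex.normSq_nonneg (g x)
        positivity
      have hkre : ∀ x, (k x).re = Complex.normSq (h x) + (r^2)⁻¹ * Complex.normSq (g x) := by
        intro x; rw [hkapp x, Complex.ofReal_re]
      obtain ⟨u, huF, hu0, hu1⟩ := sep_lemma F hF k hkF hker
      refine ⟨C' ∩ XSet g (r/2), ⟨C', hC', r/2, by linarith, subset_rfl⟩, u, huF, ?_, ?_⟩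
      · rintro x ⟨hxC', hxg⟩
        apply hu0
        rw [hkre]
        have h0 : Complex.normSq (h x) = 0 := by rw [hh0 x hxC']; simp
        have hgx : ‖g x‖ ≤ r/2 := hxg
        have hgsq : Complex.normSq (g x) ≤ (r/2)^2 := by
          rw [← Complex.sq_norm]
          have : ‖g x‖ = ‖g x‖ := rfl
          nlinarith [norm_nonneg (g x)]
        rw [h0]
        have hr2 : (0:ℝ) < r^2 := by positivity
        rw [div_pow] at hgsq
        calc (0:ℝ) + (r^2)⁻¹ * Complex.normSq (g x) ≤ 0 + (r^2)⁻¹ * (r^2/2^2) := by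
              have := Complex.normSq_nonneg (g x)
              gcongr
          _ = 1/4 := by field_simp; ring
      · intro x hxA
        apply hu1
        rw [hkre]
        have hx : x ∉ C ∩ XSet g r := fun hx => hxA (hCrA hx)
        have hns : (0:ℝ) ≤ Complex.normSq (h x) := Complex.normSq_nonneg _
        have hns' : (0:ℝ) ≤ Complex.normSq (g x) := Complex.normSq_nonneg _
        rcases not_and_or.mp (by simpa [Set.mem_inter_iff] using hx) with hxC | hxg
        · rw [hh1 x hxC]
          simp only [Complex.normSq_one]
          have hpr : (0:ℝ) ≤ (r^2)⁻¹ * Complex.normSq (g x) := by positivity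
          linarith
        · have hgx : r < ‖g x‖ := lt_of_not_ge (by simpa [XSet] using hxg)
          have htt : r^2 < Complex.normSq (g x) := by
            rw [← Complex.sq_norm]
            have habs : ‖g x‖ = ‖g x‖ := rfl
            nlinarith
          have hr2 : (0:ℝ) < r^2 := by positivity
          have h2 : 1 < (r^2)⁻¹ * Complex.normSq (g x) := by
            have h3 := mul_lt_mul_of_pos_left htt (inv_pos.mpr hr2)
            rwa [inv_mul_cancel₀ (ne_of_gt hr2)] at h3
          linarith

lemma sUnion_chain_ffilter (F : StarSubalgebra ℂ (BoundedContinuousFunction X ℂ))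
    {c : Set (Set (Set X))} (hc : IsChain (· ⊆ ·) c) (hcne : c.Nonempty)
    (hcf : ∀ ψ ∈ c, FFilter F ψ) : FFilter F (⋃₀ c) := by
  obtain ⟨ψ₀, hψ₀⟩ := hcne
  have hsub : ∀ ψ ∈ c, ψ ⊆ ⋃₀ c := fun ψ hψ A hA => ⟨ψ, hψ, hA⟩
  constructor
  · refine ⟨⟨Set.univ, hsub ψ₀ hψ₀ (univ_mem_of_filter (hcf ψ₀ hψ₀).1)⟩, ?_, ?_, ?_⟩
    · rintro A ⟨ψ₁, hψ₁, hA⟩ B ⟨ψ₂, hψ₂, hB⟩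
      rcases hc.total hψ₁ hψ₂ with h | h
      · exact hsub ψ₂ hψ₂ ((hcf ψ₂ hψ₂).1.2.1 A (h hA) B hB)
      · exact hsub ψ₁ hψ₁ ((hcf ψ₁ hψ₁).1.2.1 A hA B (h hB))
    · rintro A ⟨ψ₁, hψ₁, hA⟩ B hAB
      exact hsub ψ₁ hψ₁ ((hcf ψ₁ hψ₁).1.2.2.1 A hA B hAB)
    · rintro ⟨ψ₁, hψ₁, hA⟩
      exact (hcf ψ₁ hψ₁).1.2.2.2 hA
  · refine ⟨⟨Set.univ, hsub ψ₀ hψ₀ (univ_mem_of_filter (hcf ψ₀ hψ₀).1)⟩, ?_, ?_⟩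
    · rintro A ⟨ψ₁, hψ₁, hA⟩
      exact (hcf ψ₁ hψ₁).2.2.1 A hA
    · rintro A ⟨ψ₁, hψ₁, hA⟩ hAuniv
      obtain ⟨B, hB, f, hfF, hf0, hf1⟩ := (hcf ψ₁ hψ₁).2.2.2 A hA hAuniv
      exact ⟨B, hsub ψ₁ hψ₁ hB, f, hfF, hf0, hf1⟩

lemma exists_ultra (F : StarSubalgebra ℂ (BoundedContinuousFunction X ℂ))
    (hF : IsClosed (F : Set (BoundedContinuousFunction X ℂ)))
    {φ : Set (Set X)} (hφ : FFilter F φ) {A : Set X} (hA : A ∉ φ) :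
    ∃ p : Set (Set X), FUltrafilter F p ∧ φ ⊆ p ∧ A ∉ p := by
  set S : Set (Set (Set X)) := {ψ | FFilter F ψ ∧ φ ⊆ ψ ∧ A ∉ ψ} with hS
  have hchain : ∀ c ⊆ S, IsChain (· ⊆ ·) c → c.Nonempty →
      ∃ ub ∈ S, ∀ s ∈ c, s ⊆ ub := by
    intro c hcS hc hcne
    refine ⟨⋃₀ c, ⟨sUnion_chain_ffilter F hc hcne (fun ψ hψ => (hcS hψ).1), ?_, ?_⟩,
      fun ψ hψ => fun x hx => ⟨ψ, hψ, hx⟩⟩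
    · obtain ⟨ψ₀, hψ₀⟩ := hcne
      exact ((hcS hψ₀).2.1).trans (fun x hx => ⟨ψ₀, hψ₀, hx⟩)
    · rintro ⟨ψ₁, hψ₁, hA1⟩
      exact (hcS hψ₁).2.2 hA1
  obtain ⟨m, hφm, hmS, hmax⟩ : ∃ m, φ ⊆ m ∧ m ∈ S ∧ ∀ b ∈ S, m ⊆ b → b ⊆ m := by
    obtain ⟨m, hm1, hm2⟩ := zorn_subset_nonempty S hchain φ ⟨hφ, subset_rfl, hA⟩
    exact ⟨m, hm1, hm2.1, fun b hb hmb => hm2.2 hb hmb⟩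
  obtain ⟨hmf, hφm', hAm⟩ := hmS
  refine ⟨m, ⟨hmf, ?_⟩, hφm, hAm⟩
  intro χ hχ hmχ
  have hAχ : A ∉ χ := by
    intro hAχ
    have hAuniv : A ≠ Set.univ := fun h => hA (h ▸ univ_mem_of_filter hφ.1)
    obtain ⟨B, hBχ, f, hfF, hf0, hf1⟩ := hχ.2.2.2 A hAχ hAuniv
    set g : BoundedContinuousFunction X ℂ := 1 - f with hg
    have hgF : g ∈ F := sub_mem (one_mem F) hfF
    have hg1 : ∀ x ∈ B, g x = 1 := by
      intro x hx
      simp [hg, BoundedContinuousFunction.sub_apply, hf0 x hx]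
    have hg0 : ∀ x ∉ A, g x = 0 := by
      intro x hx
      simp [hg, BoundedContinuousFunction.sub_apply, hf1 x hx]
    have hCA : ∀ C ∈ m, (C ∩ Aᶜ).Nonempty := by
      intro C hC
      rcases Set.not_subset.mp (fun hsub => hAm (hmf.1.2.2.1 C hC A hsub)) with ⟨x, hxC, hxA⟩
      exact ⟨x, hxC, hxA⟩
    have hne : ∀ C ∈ m, ∀ r : ℝ, 0 < r → (C ∩ XSet g r).Nonempty := by
      intro C hC r hr
      obtain ⟨x, hxC, hxA⟩ := hCA C hC
      refine ⟨x, hxC, ?_⟩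
      show ‖g x‖ ≤ r
      rw [hg0 x hxA]
      simpa using le_of_lt hr
    obtain ⟨hψ'f, hmψ', hXψ'⟩ := extFilter_spec F hF hmf hgF hne
    have hAψ' : A ∉ extFilter m g := by
      rintro ⟨C, hC, r, hr, hsub⟩
      obtain ⟨x, hxC, hxA⟩ := hCA C hC
      refine hxA (hsub ⟨hxC, ?_⟩)
      show ‖g x‖ ≤ r
      rw [hg0 x hxA]
      simpa using le_of_lt hr
    have hψ'S : extFilter m g ∈ S := ⟨hψ'f, hφm.trans hmψ', hAψ'⟩
    have hψ'm : extFilter m g ⊆ m := hmax _ hψ'S hmψ'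
    have hXm : XSet g (1/2) ∈ m := hψ'm (hXψ' (1/2) (by norm_num))
    have hBXχ : B ∩ XSet g (1/2) ∈ χ := hχ.1.2.1 B hBχ _ (hmχ hXm)
    obtain ⟨x, hxB, hxX⟩ := hχ.2.2.1 _ hBXχ
    have : ‖g x‖ ≤ 1/2 := hxX
    rw [hg1 x hxB] at this
    norm_num at this
  have hχS : χ ∈ S := ⟨hχ, hφm.trans hmχ, hAχ⟩
  exact subset_antisymm (hmax _ hχS hmχ) hmχ

lemma mem_iff_forall (F : StarSubalgebra ℂ (BoundedContinuousFunction X ℂ))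
    (hF : IsClosed (F : Set (BoundedContinuousFunction X ℂ)))
    {φ : Set (Set X)} (hφ : FFilter F φ) (A : Set X) :
    A ∈ φ ↔ ∀ p : Delta F, φ ⊆ p.1 → A ∈ p.1 := by
  constructor
  · exact fun h p hp => hp h
  · intro h
    by_contra hA
    obtain ⟨p, hp, hφp, hAp⟩ := exists_ultra F hF hφ hA
    exact hAp (h ⟨p, hp⟩ hφp)


theorem stmt5 (F : StarSubalgebra ℂ (BoundedContinuousFunction X ℂ)) (hF : IsClosed (F : Set (BoundedContinuousFunction X ℂ)))
    (φ ψ : Set (Set X)) (hφ : FFilter F φ) (hψ : FFilter F ψ) :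
    hatF F φ = ⋂ A ∈ φ, hatSet F A ∧
    φ = ⋂ p ∈ hatF F φ, (p : Delta F).1 ∧
    (φ ⊆ ψ ↔ hatF F ψ ⊆ hatF F φ) ∧
    (φ = ψ ↔ hatF F φ = hatF F ψ) := by
  have key : ∀ χ : Set (Set X), FFilter F χ → χ = ⋂ p ∈ hatF F χ, (p : Delta F).1 := by
    intro χ hχ
    ext A
    simp only [Set.mem_iInter]
    rw [mem_iff_forall F hF hχ A]
    constructor
    · exact fun h p hp => h p hp
    · exact fun h p hp => h p hp
  have subs : φ ⊆ ψ ↔ hatF F ψ ⊆ hatF F φ := by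
    constructor
    · exact fun h p hp a ha => hp (h ha)
    · intro h a ha
      rw [mem_iff_forall F hF hψ a]
      intro p hp
      exact (h hp : φ ⊆ p.1) ha
  refine ⟨?_, key φ hφ, subs, ?_⟩
  · ext p
    simp only [hatF, hatSet, Set.mem_iInter, Set.mem_setOf_eq, Set.subset_def]
  · constructor
    · exact fun h => h ▸ rfl
    · intro h
      have h1 : φ ⊆ ψ := subs.mpr (h ▸ subset_rfl)
      have h2 : ψ ⊆ φ := by
        have subs2 : ψ ⊆ φ ↔ hatF F φ ⊆ hatF F ψ := by
          constructor
          · exact fun h p hp a ha => hp (h ha)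
          · intro h a ha
            rw [mem_iff_forall F hF hφ a]
            intro p hp
            exact (h hp : ψ ⊆ p.1) ha
        exact subs2.mpr (h ▸ subset_rfl)
      exact subset_antisymm h1 h2
end

section
/- Let A be a non-empty subset of X and let p ∈ δX. The following statements are equivalent: (i) p lies in the closure of e(A) in δX; (ii) A ∩ B ≠ ∅ for every B ∈ p; (iii) X(f,r) ∈ p for every f ∈ Z(A) and every r > 0. In particular, p lies in the closure of e(A) in δX for every A ∈ p. -/
open Set

variable {X : Type*} [Nonempty X] [TopologicalSpace X] [DiscreteTopology X]

section Aux

variable {F : StarSubalgebra ℂ (BoundedContinuousFunction X ℂ)}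

lemma mem_up {p : Set (Set X)} (hp : IsSetFilter p) {A B : Set X} (hA : A ∈ p)
    (hAB : A ⊆ B) : B ∈ p := hp.2.2.1 A hA B hAB

lemma univ_mem' {p : Set (Set X)} (hp : IsSetFilter p) : Set.univ ∈ p := by
  obtain ⟨B, hB⟩ := hp.1
  exact mem_up hp hB (Set.subset_univ B)

lemma delta_filter (p : Delta F) : IsSetFilter p.1 := p.2.1.1

lemma delta_family (p : Delta F) : FFamily F p.1 := p.2.1.2

/-- Evaluation at a point, as an algebra homomorphism. -/
noncomputable def evalPt (x : X) : BoundedContinuousFunction X ℂ →ₐ[ℂ] ℂ where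
  toFun h := h x
  map_one' := rfl
  map_mul' _ _ := rfl
  map_zero' := rfl
  map_add' _ _ := rfl
  commutes' _ := rfl

/-- Functional-calculus construction: a bump function in `F`. -/
lemma exists_bump (hF : IsClosed (F : Set (BoundedContinuousFunction X ℂ)))
    {f : BoundedContinuousFunction X ℂ} (hf : f ∈ F) {r : ℝ} (hr : 0 < r) :
    ∃ u ∈ F, (∀ x, ‖f x‖ ≤ r / 2 → u x = 0) ∧ (∀ x, r ≤ ‖f x‖ → u x = 1) := by
  set a : ℝ := (r / 2) ^ 2 with ha
  set b : ℝ := r ^ 2 with hb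
  have hab : a < b := by
    have : 0 < r / 2 := by linarith
    calc a = (r/2)^2 := rfl
    _ < r ^ 2 := by nlinarith
  set ψ : ℝ → ℝ := fun t => min 1 (max 0 ((t - a) / (b - a))) with hψ
  have hψ01 : ∀ t, 0 ≤ ψ t ∧ ψ t ≤ 1 := by
    intro t
    constructor
    · exact le_min (by norm_num) (le_max_left _ _)
    · exact min_le_left _ _
  have hψ0 : ∀ t ≤ a, ψ t = 0 := by
    intro t ht
    have h1 : (t - a) / (b - a) ≤ 0 :=
      div_nonpos_of_nonpos_of_nonneg (by linarith) (by linarith)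
    simp only [hψ]
    rw [max_eq_left h1, min_eq_right (by norm_num)]
  have hψ1 : ∀ t, b ≤ t → ψ t = 1 := by
    intro t ht
    have h1 : (1 : ℝ) ≤ (t - a) / (b - a) := by
      rw [le_div_iff₀ (by linarith)]; linarith
    simp only [hψ]
    rw [max_eq_right (by linarith), min_eq_left h1]
  have hψc : Continuous ψ := by
    apply Continuous.min continuous_const
    apply Continuous.max continuous_const
    exact (continuous_id.sub continuous_const).div_const _
  -- the bump function
  set u : BoundedContinuousFunction X ℂ :=
    BoundedContinuousFunction.ofNormedAddCommGroup
      (fun x => ((ψ (‖f x‖ ^ 2) : ℝ) : ℂ)) continuous_of_discreteTopology 1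
      (by
        intro x
        rw [Complex.norm_real, Real.norm_eq_abs, abs_of_nonneg (hψ01 _).1]
        exact (hψ01 _).2) with hu
  have hux : ∀ x, u x = ((ψ (‖f x‖ ^ 2) : ℝ) : ℂ) := fun x => rfl
  refine ⟨u, ?_, ?_, ?_⟩
  · -- u ∈ F, by Weierstrass approximation
    have : u ∈ closure (F : Set (BoundedContinuousFunction X ℂ)) := by
      rw [Metric.mem_closure_iff]
      intro ε hε
      obtain ⟨P, hP⟩ := exists_polynomial_near_of_continuousOn 0 (‖f‖ ^ 2) ψ
        (hψc.continuousOn) (ε / 2) (by linarith)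
      set g : BoundedContinuousFunction X ℂ := star f * f with hg
      have hgF0 : g ∈ F := mul_mem (star_mem hf) hf
      have hgF : g ∈ F.toSubalgebra := hgF0
      set Pc : Polynomial ℂ := P.map (algebraMap ℝ ℂ) with hPc
      refine ⟨Polynomial.aeval g Pc, ?_, ?_⟩
      · have := Subalgebra.aeval_coe F.toSubalgebra ⟨g, hgF⟩ Pc
        rw [show ((⟨g, hgF⟩ : F.toSubalgebra) : BoundedContinuousFunction X ℂ) = g from rfl] at this
        rw [this]
        exact (Polynomial.aeval (⟨g, hgF⟩ : F.toSubalgebra) Pc).2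
      · have hdist : dist u (Polynomial.aeval g Pc) ≤ ε / 2 := by
          rw [BoundedContinuousFunction.dist_le (by linarith)]
          intro x
          have hgx : g x = ((‖f x‖ ^ 2 : ℝ) : ℂ) := by
            have : g x = star (f x) * f x := rfl
            rw [this, Complex.star_def, mul_comm, Complex.mul_conj']
            norm_cast
          have hevalx : (Polynomial.aeval g Pc) x
              = ((P.eval (‖f x‖ ^ 2) : ℝ) : ℂ) := by
            have h1 : (Polynomial.aeval g Pc) x = Polynomial.aeval (g x) Pc :=
              (Polynomial.aeval_algHom_apply (evalPt x) g Pc).symm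
            rw [h1, hgx, hPc, Polynomial.aeval_def, Polynomial.eval₂_eq_eval_map,
              Polynomial.map_map]
            have : (algebraMap ℂ ℂ).comp (algebraMap ℝ ℂ) = algebraMap ℝ ℂ := by
              ext t; simp
            rw [this, Polynomial.eval_map]
            exact Polynomial.eval₂_at_apply (algebraMap ℝ ℂ) _
          rw [hux, hevalx, Complex.dist_eq]
          push_cast
          rw [show ((ψ (‖f x‖ ^ 2) : ℝ) : ℂ) - ((P.eval (‖f x‖ ^ 2) : ℝ) : ℂ)
              = (((ψ (‖f x‖ ^ 2) - P.eval (‖f x‖ ^ 2) : ℝ)) : ℂ) by push_cast; ring,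
            Complex.norm_real, Real.norm_eq_abs]
          have hmem : ‖f x‖ ^ 2 ∈ Set.Icc (0:ℝ) (‖f‖ ^ 2) := by
            constructor
            · positivity
            · have := BoundedContinuousFunction.norm_coe_le_norm f x
              nlinarith [norm_nonneg (f x)]
          have := hP _ hmem
          linarith [abs_sub_comm (P.eval (‖f x‖^2)) (ψ (‖f x‖^2))]
        exact lt_of_le_of_lt hdist (by linarith)
    rwa [hF.closure_eq] at this
  · intro x hx
    rw [hux]
    norm_cast
    apply hψ0
    rw [ha]
    nlinarith [norm_nonneg (f x)]
  · intro x hx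
    rw [hux]
    norm_cast
    apply hψ1
    rw [hb]
    nlinarith [norm_nonneg (f x)]

end Aux


section Aux2

variable {F : StarSubalgebra ℂ (BoundedContinuousFunction X ℂ)}

/-- Key lemma: if every member of an `F`-ultrafilter meets every `X(f,r)`, then
`X(f,r) ∈ p` for all `r > 0`. -/
lemma key_lemma (hF : IsClosed (F : Set (BoundedContinuousFunction X ℂ)))
    (p : Delta F) {f : BoundedContinuousFunction X ℂ} (hf : f ∈ F)
    (h : ∀ B ∈ p.1, ∀ r : ℝ, 0 < r → (B ∩ XSet f r).Nonempty) :
    ∀ r : ℝ, 0 < r → XSet f r ∈ p.1 := by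
  set ψ : Set (Set X) := {C | ∃ B ∈ p.1, ∃ r : ℝ, 0 < r ∧ B ∩ XSet f r ⊆ C} with hψdef
  have hpfil := delta_filter p
  have hpfam := delta_family p
  have hXmono : ∀ {r s : ℝ}, r ≤ s → XSet f r ⊆ XSet f s := by
    intro r s hrs x hx; exact le_trans hx hrs
  have hψX : ∀ r : ℝ, 0 < r → XSet f r ∈ ψ := by
    intro r hr
    exact ⟨Set.univ, univ_mem' hpfil, r, hr, by simp⟩
  have hsub : p.1 ⊆ ψ := by
    intro B hB
    exact ⟨B, hB, 1, one_pos, fun x hx => hx.1⟩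
  have hfil : IsSetFilter ψ := by
    refine ⟨⟨XSet f 1, hψX 1 one_pos⟩, ?_, ?_, ?_⟩
    · rintro C₁ ⟨B₁, hB₁, r₁, hr₁, hs₁⟩ C₂ ⟨B₂, hB₂, r₂, hr₂, hs₂⟩
      refine ⟨B₁ ∩ B₂, hpfil.2.1 _ hB₁ _ hB₂, min r₁ r₂, lt_min hr₁ hr₂, ?_⟩
      rintro x ⟨⟨hx1, hx2⟩, hx3⟩
      exact ⟨hs₁ ⟨hx1, hXmono (min_le_left _ _) hx3⟩,
        hs₂ ⟨hx2, hXmono (min_le_right _ _) hx3⟩⟩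
    · rintro C ⟨B, hB, r, hr, hs⟩ C' hCC'
      exact ⟨B, hB, r, hr, hs.trans hCC'⟩
    · rintro ⟨B, hB, r, hr, hs⟩
      obtain ⟨x, hx⟩ := h B hB r hr
      exact (hs hx).elim
  have hfam : FFamily F ψ := by
    refine ⟨⟨XSet f 1, hψX 1 one_pos⟩, ?_, ?_⟩
    · rintro C ⟨B, hB, r, hr, hs⟩
      obtain ⟨x, hx⟩ := h B hB r hr
      exact ⟨x, hs hx⟩
    · rintro C ⟨B, hB, r, hr, hs⟩ _
      obtain ⟨u, huF, hu0, hu1⟩ := exists_bump hF hf hr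
      by_cases hBuniv : B = Set.univ
      · refine ⟨XSet f (r / 2), ?_, u, huF, ?_, ?_⟩
        · exact ⟨Set.univ, univ_mem' hpfil, r / 2, by linarith, fun x hx => hx.2⟩
        · intro x hx; exact hu0 x hx
        · intro x hx
          apply hu1
          by_contra hc
          push_neg at hc
          exact hx (hs ⟨hBuniv ▸ Set.mem_univ x, le_of_lt hc⟩)
      · obtain ⟨B', hB', g, hgF, hg0, hg1⟩ := hpfam.2.2 B hB hBuniv
        refine ⟨B' ∩ XSet f (r / 2),
          ⟨B', hB', r / 2, by linarith, fun x hx => hx⟩,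
          g + u - g * u, ?_, ?_, ?_⟩
        · exact sub_mem (add_mem hgF huF) (mul_mem hgF huF)
        · rintro x ⟨hx1, hx2⟩
          have h1 : g x = 0 := hg0 x hx1
          have h2 : u x = 0 := hu0 x hx2
          show g x + u x - g x * u x = 0
          rw [h1, h2]; ring
        · intro x hx
          show g x + u x - g x * u x = 1
          by_cases hxB : x ∈ B
          · have hxr : ¬ ‖f x‖ ≤ r := by
              intro hc
              exact hx (hs ⟨hxB, hc⟩)
            have h2 : u x = 1 := hu1 x (le_of_not_ge hxr)
            rw [h2]; ring
          · have h1 : g x = 1 := hg1 x hxB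
            rw [h1]; ring
  intro r hr
  have := p.2.2 ψ ⟨hfil, hfam⟩ hsub
  rw [← this]
  exact hψX r hr

/-- The hat sets form a topological basis of `Delta F`. -/
lemma hat_basis :
    TopologicalSpace.IsTopologicalBasis {S : Set (Delta F) | ∃ A : Set X, S = hatSet F A} := by
  refine ⟨?_, ?_, rfl⟩
  · rintro S₁ ⟨A₁, rfl⟩ S₂ ⟨A₂, rfl⟩ q ⟨hq1, hq2⟩
    refine ⟨hatSet F (A₁ ∩ A₂), ⟨A₁ ∩ A₂, rfl⟩,
      (delta_filter q).2.1 _ hq1 _ hq2, ?_⟩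
    rintro q' hq'
    exact ⟨mem_up (delta_filter q') hq' Set.inter_subset_left,
      mem_up (delta_filter q') hq' Set.inter_subset_right⟩
  · apply Set.eq_univ_of_forall
    intro q
    exact Set.mem_sUnion.2 ⟨hatSet F Set.univ, ⟨Set.univ, rfl⟩, univ_mem' (delta_filter q)⟩

/-- Characterization of membership in the closure of `e '' A`. -/
lemma mem_closure_iff_hat (e : X → Delta F)
    (he : ∀ x : X, (e x).1 = {A : Set X | A ∈ @nhds X (tauF F) x})
    (A : Set X) (p : Delta F) :
    p ∈ closure (e '' A) ↔ ∀ B ∈ p.1, ∃ x ∈ A, B ∈ @nhds X (tauF F) x := by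
  rw [hat_basis.mem_closure_iff]
  constructor
  · intro h B hB
    obtain ⟨q, hq1, hq2⟩ := h (hatSet F B) ⟨B, rfl⟩ hB
    obtain ⟨x, hxA, hxq⟩ := hq2
    refine ⟨x, hxA, ?_⟩
    have : B ∈ (e x).1 := hxq ▸ hq1
    rwa [he x] at this
  · rintro h S ⟨B, rfl⟩ hpB
    obtain ⟨x, hxA, hxB⟩ := h B hpB
    refine ⟨e x, ?_, ⟨x, hxA, rfl⟩⟩
    show B ∈ (e x).1
    rw [he x]
    exact hxB

/-- Condition (2) implies condition (1). -/
lemma two_implies_one (e : X → Delta F)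
    (he : ∀ x : X, (e x).1 = {A : Set X | A ∈ @nhds X (tauF F) x})
    (A : Set X) (hA : A.Nonempty) (p : Delta F)
    (h2 : ∀ B ∈ p.1, (A ∩ B).Nonempty) :
    p ∈ closure (e '' A) := by
  rw [mem_closure_iff_hat e he]
  intro B hB
  by_cases hBuniv : B = Set.univ
  · obtain ⟨x, hx⟩ := hA
    exact ⟨x, hx, hBuniv ▸ Filter.univ_mem⟩
  · obtain ⟨B', hB', g, hgF, hg0, hg1⟩ := (delta_family p).2.2 B hB hBuniv
    obtain ⟨x, hxA, hxB'⟩ := h2 B' hB'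
    refine ⟨x, hxA, ?_⟩
    set U : Set X := (fun y => g y) ⁻¹' Metric.ball 0 1 with hU
    have hUopen : (tauF F).IsOpen U := by
      have hle : tauF F ≤ TopologicalSpace.induced (fun y => g y) inferInstance :=
        iInf₂_le _ hgF
      exact hle _ ⟨Metric.ball 0 1, Metric.isOpen_ball, rfl⟩
    have hxU : x ∈ U := by
      show g x ∈ Metric.ball 0 1
      simp [hg0 x hxB']
    have hUB : U ⊆ B := by
      intro y hy
      by_contra hyB
      simp only [hU, Set.mem_preimage, Metric.mem_ball, dist_zero_right] at hy
      rw [hg1 y hyB] at hy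
      norm_num at hy
    exact @mem_nhds_iff X (tauF F) x B |>.mpr ⟨U, hUB, hUopen, hxU⟩

end Aux2

theorem stmt7 (F : StarSubalgebra ℂ (BoundedContinuousFunction X ℂ)) (hF : IsClosed (F : Set (BoundedContinuousFunction X ℂ))) (e : X → Delta F) (he : ∀ x : X, (e x).1 = {A : Set X | A ∈ @nhds X (tauF F) x})
    (A : Set X) (hA : A.Nonempty) (p : Delta F) :
    List.TFAE
      [p ∈ closure (e '' A),
       ∀ B ∈ p.1, (A ∩ B).Nonempty,
       ∀ f ∈ ZSet F A, ∀ r : ℝ, 0 < r → XSet f r ∈ p.1] ∧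
    ∀ B ∈ p.1, p ∈ closure (e '' B) := by
  constructor
  · tfae_have 1 → 2 := by
      intro h1 B hB
      rw [mem_closure_iff_hat e he] at h1
      obtain ⟨x, hxA, hxB⟩ := h1 B hB
      exact ⟨x, hxA, @mem_of_mem_nhds X (tauF F) x B hxB⟩
    tfae_have 2 → 3 := by
      intro h2 f hfZ r hr
      refine key_lemma hF p hfZ.1 ?_ r hr
      intro B hB s hs
      obtain ⟨x, hxA, hxB⟩ := h2 B hB
      refine ⟨x, hxB, ?_⟩
      show ‖f x‖ ≤ s
      rw [hfZ.2 x hxA]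
      simpa using le_of_lt hs
    tfae_have 3 → 2 := by
      intro h3 B hB
      by_contra hc
      rw [Set.not_nonempty_iff_eq_empty] at hc
      have hBuniv : B ≠ Set.univ := by
        rintro rfl
        rw [Set.inter_univ] at hc
        obtain ⟨x, hx⟩ := hA
        exact absurd hc (Set.nonempty_iff_ne_empty.1 ⟨x, hx⟩)
      obtain ⟨B', hB', g, hgF, hg0, hg1⟩ := (delta_family p).2.2 B hB hBuniv
      have h1g : (1 - g : BoundedContinuousFunction X ℂ) ∈ ZSet F A := by
        refine ⟨sub_mem (one_mem F) hgF, ?_⟩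
        intro x hxA
        have hxB : x ∉ B := by
          intro hxB
          have : x ∈ A ∩ B := ⟨hxA, hxB⟩
          rw [hc] at this
          exact this
        show (1 : BoundedContinuousFunction X ℂ) x - g x = 0
        rw [hg1 x hxB]
        simp
      have hXp : XSet (1 - g) (1/2) ∈ p.1 := h3 _ h1g (1/2) (by norm_num)
      have hint : B' ∩ XSet (1 - g) (1/2) = ∅ := by
        rw [Set.eq_empty_iff_forall_notMem]
        rintro x ⟨hx1, hx2⟩
        have : ‖(1 - g : BoundedContinuousFunction X ℂ) x‖ ≤ 1/2 := hx2
        have hval : (1 - g : BoundedContinuousFunction X ℂ) x = 1 := by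
          show (1 : BoundedContinuousFunction X ℂ) x - g x = 1
          rw [hg0 x hx1]
          simp
        rw [hval] at this
        norm_num at this
      have : (∅ : Set X) ∈ p.1 := hint ▸ (delta_filter p).2.1 _ hB' _ hXp
      exact (delta_filter p).2.2.2 this
    tfae_have 2 → 1 := by
      intro h2
      exact two_implies_one e he A hA p h2
    tfae_finish
  · intro B hB
    apply two_implies_one e he B ((delta_family p).2.1 B hB) p
    intro B' hB'
    have : B ∩ B' ∈ p.1 := (delta_filter p).2.1 _ hB _ hB'
    exact (delta_family p).2.1 _ this
end
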